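/- Let f and h be self-maps of a metric space (X,d) such that the pair (f,h) is subcompatible and subsequentially continuous with a common witnessing sequence. Let 0 < a < 1, α, β ∈ (0,1], p a positive integer, and F : ℝ₊ → ℝ₊ upper semicontinuous with F(t) < t for every t > 0. Suppose that for all x, y ∈ X: d(fx,fy)^p ≤ F( a·d(hx,hy)^p + (1−a)·max{ α·d(fx,hx)^p, β·d(fy,hy)^p, d(fx,hx)^{p/2}·d(fx,hy)^{p/2}, d(fx,hy)^{p/2}·d(hx,fy)^{p/2}, (d(fx,hx)^p + d(fy,hy)^p)/2 } ). Then f and h have a unique common fixed point. -/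

import Mathlib

open Filter Topology NNReal

/-- The pair `(f, g)` of self-maps of a metric space is subcompatible and
subsequentially continuous with a common witnessing sequence: there is a
sequence `x` and a point `t` with `lim f xₙ = lim g xₙ = t`,
`lim d(f (g xₙ), g (f xₙ)) = 0`, `lim f (g xₙ) = f t` and `lim g (f xₙ) = g t`. -/
def SubcompSubseqCont {X : Type*} [MetricSpace X] (f g : X → X) : Prop :=
  ∃ (x : ℕ → X) (t : X),
    Tendsto (fun n => f (x n)) atTop (𝓝 t) ∧
    Tendsto (fun n => g (x n)) atTop (𝓝 t) ∧
    Tendsto (fun n => dist (f (g (x n))) (g (f (x n)))) atTop (𝓝 (0 : ℝ)) ∧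
    Tendsto (fun n => f (g (x n))) atTop (𝓝 (f t)) ∧
    Tendsto (fun n => g (f (x n))) atTop (𝓝 (g t))

theorem common_fixed_point_gregus_two_maps {X : Type*} [MetricSpace X]
    (f h : X → X)
    (hfh : SubcompSubseqCont f h)
    (a α β : ℝ≥0) (ha0 : 0 < a) (ha1 : a < 1)
    (hα : 0 < α ∧ α ≤ 1) (hβ : 0 < β ∧ β ≤ 1)
    (p : ℕ) (hp : 0 < p)
    (F : ℝ≥0 → ℝ≥0) (hFusc : UpperSemicontinuous F)
    (hF : ∀ t : ℝ≥0, 0 < t → F t < t)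
    (hineq : ∀ x y : X,
      nndist (f x) (f y) ^ p ≤
        F (a * nndist (h x) (h y) ^ p + (1 - a) *
          max (max (max (max (α * nndist (f x) (h x) ^ p)
            (β * nndist (f y) (h y) ^ p))
            (nndist (f x) (h x) ^ ((p : ℝ) / 2) * nndist (f x) (h y) ^ ((p : ℝ) / 2)))
            (nndist (f x) (h y) ^ ((p : ℝ) / 2) * nndist (h x) (f y) ^ ((p : ℝ) / 2)))
            ((nndist (f x) (h x) ^ p + nndist (f y) (h y) ^ p) / 2))) :
    ∃! t : X, f t = t ∧ h t = t := by
  obtain ⟨x, t, hfx, hhx, hd0, hfgx, hgfx⟩ := hfh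
  have hp2 : ((p : ℝ) / 2) ≠ 0 := by positivity
  have hz : (0 : ℝ≥0) ^ ((p : ℝ) / 2) = 0 := NNReal.zero_rpow hp2
  have hrpow : ∀ d : ℝ≥0, d ^ ((p : ℝ) / 2) * d ^ ((p : ℝ) / 2) = d ^ p := by
    intro d
    rw [← NNReal.rpow_add' (by positivity), show (p : ℝ) / 2 + (p : ℝ) / 2 = (p : ℝ) by ring,
      NNReal.rpow_natCast]
  have haa : a + (1 - a) = 1 := add_tsub_cancel_of_le ha1.le
  have hconv : ∀ z : ℝ≥0, a * z + (1 - a) * z = z := by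
    intro z; rw [← add_mul, haa, one_mul]
  -- Step 1: f t = h t
  have hft_ht : f t = h t := by
    have h1 : Tendsto (fun n => dist (f (h (x n))) (h (f (x n)))) atTop
        (𝓝 (dist (f t) (h t))) := hfgx.dist hgfx
    exact dist_eq_zero.mp (tendsto_nhds_unique h1 hd0)
  -- Step 2: f t = t
  have hft : f t = t := by
    by_contra hne
    have hd₀pos : 0 < nndist (f t) t :=
      zero_lt_iff.mpr fun h0 => hne (eq_of_nndist_eq_zero h0)
    set d₀ : ℝ≥0 := nndist (f t) t with hd₀
    set L : ℝ≥0 := d₀ ^ p with hL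
    have hLpos : 0 < L := pow_pos hd₀pos p
    -- limits of the basic distance sequences (plugging x := t, y := x n)
    have l1 : Tendsto (fun n => nndist (h t) (h (x n))) atTop (𝓝 d₀) := by
      have := (tendsto_const_nhds : Tendsto (fun _ : ℕ => h t) atTop (𝓝 (h t))).nndist hhx
      simpa [← hft_ht] using this
    have l2 : Tendsto (fun n => nndist (f (x n)) (h (x n))) atTop (𝓝 0) := by
      simpa using hfx.nndist hhx
    have l3 : Tendsto (fun n => nndist (f t) (h (x n))) atTop (𝓝 d₀) := by
      simpa using (tendsto_const_nhds : Tendsto (fun _ : ℕ => f t) atTop (𝓝 (f t))).nndist hhx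
    have l4 : Tendsto (fun n => nndist (h t) (f (x n))) atTop (𝓝 d₀) := by
      have := (tendsto_const_nhds : Tendsto (fun _ : ℕ => h t) atTop (𝓝 (h t))).nndist hfx
      simpa [← hft_ht] using this
    -- continuity of z ↦ z ^ (p/2)
    have hcr : ∀ {u : ℕ → ℝ≥0} {c : ℝ≥0}, Tendsto u atTop (𝓝 c) →
        Tendsto (fun n => u n ^ ((p : ℝ) / 2)) atTop (𝓝 (c ^ ((p : ℝ) / 2))) := by
      intro u c hu
      exact (NNReal.continuousAt_rpow_const (Or.inr (by positivity))).tendsto.comp hu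
    -- the argument of F
    set G : ℕ → ℝ≥0 := fun n =>
      a * nndist (h t) (h (x n)) ^ p + (1 - a) *
        max (max (max (max (α * nndist (f t) (h t) ^ p)
          (β * nndist (f (x n)) (h (x n)) ^ p))
          (nndist (f t) (h t) ^ ((p : ℝ) / 2) * nndist (f t) (h (x n)) ^ ((p : ℝ) / 2)))
          (nndist (f t) (h (x n)) ^ ((p : ℝ) / 2) * nndist (h t) (f (x n)) ^ ((p : ℝ) / 2)))
          ((nndist (f t) (h t) ^ p + nndist (f (x n)) (h (x n)) ^ p) / 2) with hG
    have hGlim : Tendsto G atTop (𝓝 L) := by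
      have hfth : nndist (f t) (h t) = 0 := by rw [hft_ht, nndist_self]
      have key : Tendsto G atTop (𝓝
          (a * d₀ ^ p + (1 - a) *
            max (max (max (max (α * (0:ℝ≥0) ^ p) (β * (0:ℝ≥0) ^ p))
              ((0:ℝ≥0) ^ ((p : ℝ) / 2) * d₀ ^ ((p : ℝ) / 2)))
              (d₀ ^ ((p : ℝ) / 2) * d₀ ^ ((p : ℝ) / 2)))
              (((0:ℝ≥0) ^ p + (0:ℝ≥0) ^ p) / 2))) := by
        rw [hG]
        simp only [hfth]
        refine ((l1.pow p).const_mul a).add (Tendsto.const_mul (1 - a) ?_)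
        refine Tendsto.max (Tendsto.max (Tendsto.max (Tendsto.max ?_ ?_) ?_) ?_) ?_
        · exact tendsto_const_nhds
        · exact (l2.pow p).const_mul β
        · exact tendsto_const_nhds.mul (hcr l3)
        · exact (hcr l3).mul (hcr l4)
        · exact (tendsto_const_nhds.add (l2.pow p)).div_const 2
      have : (a * d₀ ^ p + (1 - a) *
            max (max (max (max (α * (0:ℝ≥0) ^ p) (β * (0:ℝ≥0) ^ p))
              ((0:ℝ≥0) ^ ((p : ℝ) / 2) * d₀ ^ ((p : ℝ) / 2)))
              (d₀ ^ ((p : ℝ) / 2) * d₀ ^ ((p : ℝ) / 2)))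
              (((0:ℝ≥0) ^ p + (0:ℝ≥0) ^ p) / 2)) = L := by
        rw [zero_pow hp.ne', hz, hrpow]
        simp only [mul_zero, zero_mul, max_self, zero_add, zero_div]
        rw [max_eq_left zero_le', max_eq_right zero_le', hconv]
      rwa [this] at key
    -- derive contradiction from upper semicontinuity
    obtain ⟨y, hy1, hy2⟩ := exists_between (hF L hLpos)
    have hev : ∀ᶠ z in 𝓝 L, F z < y := hFusc L y hy1
    have hev2 : ∀ᶠ n in atTop, F (G n) < y := hGlim.eventually hev
    have hLHS : Tendsto (fun n => nndist (f t) (f (x n)) ^ p) atTop (𝓝 L) := by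
      have := (tendsto_const_nhds : Tendsto (fun _ : ℕ => f t) atTop (𝓝 (f t))).nndist hfx
      exact this.pow p
    have hle : L ≤ y :=
      le_of_tendsto hLHS (hev2.mono fun n hn => ((hineq t (x n)).trans hn.le))
    exact absurd hle (not_le.mpr hy2)
  have hht : h t = t := by rw [← hft_ht, hft]
  -- uniqueness of common fixed points
  refine ⟨t, ⟨hft, hht⟩, ?_⟩
  rintro u ⟨hfu, hhu⟩
  by_contra hne
  have hdpos : 0 < nndist u t :=
    zero_lt_iff.mpr fun h0 => hne (eq_of_nndist_eq_zero h0)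
  set d : ℝ≥0 := nndist u t with hd
  have := hineq u t
  rw [hfu, hft, hhu, hht] at this
  simp only [nndist_self, zero_pow hp.ne', hz, hrpow, mul_zero, zero_mul, max_self,
    add_zero, zero_add, zero_div] at this
  rw [max_eq_left zero_le', max_eq_right zero_le', hconv] at this
  exact absurd this (not_le.mpr (hF _ (pow_pos hdpos p)))
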